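/- Let f : ℝ^n → ℝ ∪ {+∞} be proper and lower semicontinuous, H : ℝ^n × ℝ^m → ℝ be continuous, γ₁, L > 0. Suppose sequences (x_k), (p_k) in ℝ^n, (w_k) in ℝ^m satisfy: p_k minimizes u ↦ f(u) + (γ₁L/2)‖u − x_k‖² + ⟨u − x_k, ∇ₓH(x_k, w_k)⟩ over ℝ^n for each k, x_k → x̄, p_k → x̄, p_k − x_k → 0, and w_k → w̄, with ∇ₓH continuous. Then f(p_k) → f(x̄). -/

import Mathlib

open Set Filter

/-- Continuity of function values along prox sequences: if `f` is proper lsc, `∇ₓH` (here `gx`)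
is continuous, each `p_k` minimizes `u ↦ f(u) + (γ₁L/2)‖u − x_k‖² + ⟨u − x_k, ∇ₓH(x_k, w_k)⟩`,
and `x_k → x̄`, `p_k → x̄`, `p_k − x_k → 0`, `w_k → w̄`, then `f(p_k) → f(x̄)`. -/
theorem stmt_16 {n m : ℕ}
    (f : EuclideanSpace ℝ (Fin n) → EReal)
    (hproper : ∃ u, f u ≠ ⊤) (hnbot : ∀ u, f u ≠ ⊥) (hlsc : LowerSemicontinuous f)
    (H : EuclideanSpace ℝ (Fin n) × EuclideanSpace ℝ (Fin m) → ℝ) (hH : Continuous H)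
    (gx : EuclideanSpace ℝ (Fin n) × EuclideanSpace ℝ (Fin m) → EuclideanSpace ℝ (Fin n))
    (hgx : ∀ p, HasGradientAt (fun x' => H (x', p.2)) (gx p) p.1)
    (hgxcont : Continuous gx)
    (γ₁ L : ℝ) (hγ₁ : 0 < γ₁) (hL : 0 < L)
    (x p : ℕ → EuclideanSpace ℝ (Fin n)) (w : ℕ → EuclideanSpace ℝ (Fin m))
    (xbar : EuclideanSpace ℝ (Fin n)) (wbar : EuclideanSpace ℝ (Fin m))
    (hmin : ∀ k, ∀ u : EuclideanSpace ℝ (Fin n),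
      f (p k) + ((γ₁ * L / 2 * ‖p k - x k‖ ^ 2
          + (inner ℝ (p k - x k) (gx (x k, w k)) : ℝ) : ℝ) : EReal)
        ≤ f u + ((γ₁ * L / 2 * ‖u - x k‖ ^ 2
          + (inner ℝ (u - x k) (gx (x k, w k)) : ℝ) : ℝ) : EReal))
    (hx : Tendsto x atTop (nhds xbar))
    (hp : Tendsto p atTop (nhds xbar))
    (hpx : Tendsto (fun k => p k - x k) atTop (nhds 0))
    (hw : Tendsto w atTop (nhds wbar)) :
    Tendsto (fun k => f (p k)) atTop (nhds (f xbar)) := by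
  set g : ℕ → EuclideanSpace ℝ (Fin n) := fun k => gx (x k, w k) with hgdef
  have hg : Tendsto g atTop (nhds (gx (xbar, wbar))) :=
    (hgxcont.tendsto _).comp (hx.prodMk_nhds hw)
  set a : ℕ → ℝ := fun k =>
    γ₁ * L / 2 * ‖p k - x k‖ ^ 2 + (inner ℝ (p k - x k) (g k) : ℝ) with hadef
  set b : ℕ → ℝ := fun k =>
    γ₁ * L / 2 * ‖xbar - x k‖ ^ 2 + (inner ℝ (xbar - x k) (g k) : ℝ) with hbdef
  have hxb : Tendsto (fun k => xbar - x k) atTop (nhds 0) := by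
    simpa using hx.const_sub xbar
  have ha : Tendsto a atTop (nhds 0) := by
    have h1 : Tendsto (fun k => ‖p k - x k‖ ^ 2) atTop (nhds 0) := by
      simpa using ((continuous_norm.tendsto _).comp hpx).pow 2
    have h2 : Tendsto (fun k => (inner ℝ (p k - x k) (g k) : ℝ)) atTop (nhds 0) := by
      simpa using hpx.inner hg
    simpa using (tendsto_const_nhds.mul h1).add h2
  have hb : Tendsto b atTop (nhds 0) := by
    have h1 : Tendsto (fun k => ‖xbar - x k‖ ^ 2) atTop (nhds 0) := by
      simpa using ((continuous_norm.tendsto _).comp hxb).pow 2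
    have h2 : Tendsto (fun k => (inner ℝ (xbar - x k) (g k) : ℝ)) atTop (nhds 0) := by
      simpa using hxb.inner hg
    simpa using (tendsto_const_nhds.mul h1).add h2
  have hc : Tendsto (fun k => b k - a k) atTop (nhds 0) := by
    simpa using hb.sub ha
  have hle : ∀ k, f (p k) ≤ f xbar + ((b k - a k : ℝ) : EReal) := by
    intro k
    have h : f (p k) + (a k : EReal) ≤ f xbar + (b k : EReal) := hmin k xbar
    calc f (p k) = f (p k) + (a k : EReal) - (a k : EReal) :=
          (EReal.add_sub_cancel_right).symm
      _ ≤ f xbar + (b k : EReal) - (a k : EReal) := EReal.sub_le_sub h le_rfl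
      _ = f xbar + ((b k - a k : ℝ) : EReal) := by
          induction (f xbar) using EReal.rec with
          | bot => simp [EReal.bot_add, EReal.bot_sub]
          | coe r => norm_cast; ring
          | top => simp [← EReal.coe_sub, EReal.top_add_coe, EReal.top_sub_coe]
  have hlim : Tendsto (fun k => f xbar + ((b k - a k : ℝ) : EReal)) atTop (nhds (f xbar)) := by
    rcases eq_or_ne (f xbar) ⊤ with htop | hntop
    · rw [htop]
      have heq : (fun k => (⊤ : EReal) + ((b k - a k : ℝ) : EReal)) = fun _ => (⊤ : EReal) :=
        funext fun k => EReal.top_add_coe _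
      rw [heq]
      exact tendsto_const_nhds
    · lift f xbar to ℝ using ⟨hntop, hnbot xbar⟩ with r hr
      have : Tendsto (fun k => r + (b k - a k)) atTop (nhds r) := by
        simpa using tendsto_const_nhds.add hc
      have := (EReal.tendsto_coe).2 this
      simpa using this
  have hsup : limsup (fun k => f (p k)) atTop ≤ f xbar := by
    calc limsup (fun k => f (p k)) atTop
        ≤ limsup (fun k => f xbar + ((b k - a k : ℝ) : EReal)) atTop :=
          limsup_le_limsup (Eventually.of_forall hle)
      _ = f xbar := hlim.limsup_eq
  have hinf : f xbar ≤ liminf (fun k => f (p k)) atTop := by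
    rw [le_liminf_iff]
    intro y hy
    exact hp.eventually (hlsc xbar y hy)
  exact tendsto_of_le_liminf_of_limsup_le hinf hsup
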